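/- For the 2-DOF planar manipulator inertia matrix M(q) with entries M₁₁ = l₂²m₂ + l₁²(m₁+m₂) + 2l₁l₂m₂cos(q₂), M₁₂ = M₂₁ = l₂²m₂ + l₁l₂m₂cos(q₂), M₂₂ = l₂²m₂, with m₁, m₂, l₁, l₂ > 0, M(q) is symmetric positive definite for all q. -/

import Mathlib

open Matrix

/-- Inertia matrix of the 2-DOF planar manipulator in the simulation section. -/
noncomputable def inertia (m₁ m₂ l₁ l₂ : ℝ) (q : Fin 2 → ℝ) : Matrix (Fin 2) (Fin 2) ℝ :=
  !![l₂ ^ 2 * m₂ + l₁ ^ 2 * (m₁ + m₂) + 2 * l₁ * l₂ * m₂ * Real.cos (q 1),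
      l₂ ^ 2 * m₂ + l₁ * l₂ * m₂ * Real.cos (q 1);
    l₂ ^ 2 * m₂ + l₁ * l₂ * m₂ * Real.cos (q 1),
      l₂ ^ 2 * m₂]

/-- The 2-DOF inertia matrix is symmetric positive definite for all joint positions. -/
theorem stmt15 (m₁ m₂ l₁ l₂ : ℝ) (hm₁ : 0 < m₁) (hm₂ : 0 < m₂)
    (hl₁ : 0 < l₁) (hl₂ : 0 < l₂) (q : Fin 2 → ℝ) :
    (inertia m₁ m₂ l₁ l₂ q).IsSymm ∧ (inertia m₁ m₂ l₁ l₂ q).PosDef := by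
  have hsym : (inertia m₁ m₂ l₁ l₂ q).IsSymm := by
    ext i j
    fin_cases i <;> fin_cases j <;> simp [inertia, Matrix.transpose]
  refine ⟨hsym, Matrix.PosDef.of_dotProduct_mulVec_pos hsym fun x hx => ?_⟩
  have hpyth : Real.sin (q 1) ^ 2 + Real.cos (q 1) ^ 2 = 1 := Real.sin_sq_add_cos_sq _
  have hquad : dotProduct (star x) (inertia m₁ m₂ l₁ l₂ q *ᵥ x) =
      m₁ * l₁ ^ 2 * (x 0) ^ 2
      + m₂ * (l₁ * x 0 + l₂ * Real.cos (q 1) * (x 0 + x 1)) ^ 2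
      + m₂ * l₂ ^ 2 * Real.sin (q 1) ^ 2 * (x 0 + x 1) ^ 2 := by
    simp [inertia, dotProduct, mulVec, Fin.sum_univ_two, Matrix.mul_apply]
    linear_combination (-(m₂ * l₂ ^ 2 * (x 0 + x 1) ^ 2)) * hpyth
  rw [hquad]
  have h0 : x 0 ≠ 0 ∨ x 1 ≠ 0 := by
    by_contra h
    push_neg at h
    exact hx (funext fun i => by fin_cases i <;> simp [h.1, h.2])
  rcases eq_or_ne (x 0) 0 with h0' | h0'
  · have h1 : x 1 ≠ 0 := h0.resolve_left (by simp [h0'])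
    rw [h0']
    have key : m₂ * (l₁ * 0 + l₂ * Real.cos (q 1) * (0 + x 1)) ^ 2
        + m₂ * l₂ ^ 2 * Real.sin (q 1) ^ 2 * (0 + x 1) ^ 2
        = m₂ * l₂ ^ 2 * (x 1) ^ 2 := by
      linear_combination (m₂ * l₂ ^ 2 * (x 1) ^ 2) * hpyth
    have hx1 : 0 < (x 1) ^ 2 := by positivity
    nlinarith [mul_pos (mul_pos hm₂ (pow_pos hl₂ 2)) hx1]
  · have hx0 : 0 < (x 0) ^ 2 := by positivity
    nlinarith [sq_nonneg (l₁ * x 0 + l₂ * Real.cos (q 1) * (x 0 + x 1)),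
      sq_nonneg (Real.sin (q 1) * (x 0 + x 1)),
      mul_pos (mul_pos hm₁ (pow_pos hl₁ 2)) hx0,
      mul_nonneg hm₂.le (sq_nonneg (l₁ * x 0 + l₂ * Real.cos (q 1) * (x 0 + x 1))),
      mul_nonneg (mul_nonneg (mul_nonneg hm₂.le (pow_pos hl₂ 2).le) (sq_nonneg (Real.sin (q 1)))) (sq_nonneg (x 0 + x 1))]
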